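/- In interleaved character randomized benchmarking under gate-independent noise, the signal admits the matrix form k_m^{λ'} = e_{λ'} M(𝓔_C𝓔)^{m-1} v(𝓔_C𝓔)ᵀ · ⟨⟨Q| P_φ̂ |ρ⟩⟩, where M(𝓕)_{λ,λ̂} = tr(P_λ 𝓒 P_λ̂ 𝓒† 𝓕)/tr(P_λ) and v(𝓕)_λ = tr(P_λ 𝓕)/tr(P_λ); in particular, if 𝓔_C𝓔 = I then k_m^{λ'} = ⟨⟨Q| P_φ̂ |ρ⟩⟩ for all m. -/
import Mathlib

open Matrix

section CRBAux

variable {n : ℕ} {G : Type*} [Group G] [Fintype G]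
variable {ι : Type*} [Fintype ι] [DecidableEq ι]

/-- The linear functional `M ↦ Q ⬝ᵥ M *ᵥ ρ`. -/
noncomputable def crbL (Q ρ : Fin n → ℝ) : Matrix (Fin n) (Fin n) ℝ →ₗ[ℝ] ℝ where
  toFun M := Q ⬝ᵥ M.mulVec ρ
  map_add' A B := by simp [Matrix.add_mulVec, dotProduct_add]
  map_smul' c A := by simp [Matrix.smul_mulVec, dotProduct_smul]

@[simp] lemma crbL_apply (Q ρ : Fin n → ℝ) (M : Matrix (Fin n) (Fin n) ℝ) :
    crbL Q ρ M = Q ⬝ᵥ M.mulVec ρ := rfl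

/-- The sequence matrix. -/
noncomputable def crbX (φ : G →* Matrix (Fin n) (Fin n) ℝ)
    (E EC Cm : Matrix (Fin n) (Fin n) ℝ) (k : ℕ) (g : Fin k → G) :
    Matrix (Fin n) (Fin n) ℝ :=
  ((List.ofFn fun i => Cm * φ (g i)).reverse.prod)ᵀ *
    ((List.ofFn fun i => Cm * EC * E * φ (g i)).reverse.prod)

lemma crbX_zero (φ : G →* Matrix (Fin n) (Fin n) ℝ)
    (E EC Cm : Matrix (Fin n) (Fin n) ℝ) (g : Fin 0 → G) :
    crbX φ E EC Cm 0 g = 1 := by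
  simp [crbX]

lemma crbX_cons (φ : G →* Matrix (Fin n) (Fin n) ℝ)
    (E EC Cm : Matrix (Fin n) (Fin n) ℝ) (k : ℕ) (a : G) (t : Fin k → G) :
    crbX φ E EC Cm (k + 1) (Fin.cons a t) =
      (φ a)ᵀ * (Cmᵀ * crbX φ E EC Cm k t * (Cm * (EC * E))) * φ a := by
  simp only [crbX, List.ofFn_succ, Fin.cons_zero, Fin.cons_succ, List.reverse_cons,
    List.prod_append, List.prod_cons, List.prod_nil, mul_one, transpose_mul,
    Matrix.mul_assoc]

lemma crb_sum_cons (k : ℕ) (F : (Fin (k + 1) → G) → Matrix (Fin n) (Fin n) ℝ) :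
    ∑ g : Fin (k + 1) → G, F g = ∑ a : G, ∑ t : Fin k → G, F (Fin.cons a t) := by
  rw [← Equiv.sum_comp (Fin.consEquiv fun _ : Fin (k + 1) => G) F, Fintype.sum_prod_type]
  rfl

lemma crb_key_sum
    (φ : G →* Matrix (Fin n) (Fin n) ℝ)
    (E EC Cm : Matrix (Fin n) (Fin n) ℝ)
    (hCm : Cmᵀ * Cm = 1)
    (P : ι → Matrix (Fin n) (Fin n) ℝ)
    (hSchur : ∀ A : Matrix (Fin n) (Fin n) ℝ,
      (Fintype.card G : ℝ)⁻¹ • ∑ g : G, (φ g)ᵀ * A * φ g =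
        ∑ i, (Matrix.trace (P i * A) / Matrix.trace (P i)) • P i)
    (m : ℕ) :
    ((Fintype.card G : ℝ) ^ (m + 1))⁻¹ • ∑ g : Fin (m + 1) → G, crbX φ E EC Cm (m + 1) g
    = ∑ i, (((Matrix.of fun i j =>
          Matrix.trace (P i * Cmᵀ * P j * Cm * (EC * E)) / Matrix.trace (P i) :
            Matrix ι ι ℝ)) ^ m).mulVec
        (fun j => Matrix.trace (P j * (EC * E)) / Matrix.trace (P j)) i • P i := by
  induction m with
  | zero =>
      have hterm : ∀ (a : G) (t : Fin 0 → G),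
          crbX φ E EC Cm 1 (Fin.cons a t) = (φ a)ᵀ * (EC * E) * φ a := by
        intro a t
        rw [crbX_cons, crbX_zero]
        rw [Matrix.mul_one, ← Matrix.mul_assoc Cmᵀ Cm, hCm, Matrix.one_mul]
      rw [crb_sum_cons]
      simp only [hterm, Finset.sum_const, Finset.card_univ]
      have hcard : (Fintype.card (Fin 0 → G)) = 1 := by simp
      simp only [hcard, one_smul, zero_add, pow_one, pow_zero, Matrix.one_mulVec]
      exact hSchur (EC * E)
  | succ m ih =>
      set Mmat : Matrix ι ι ℝ := Matrix.of fun i j =>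
        Matrix.trace (P i * Cmᵀ * P j * Cm * (EC * E)) / Matrix.trace (P i) with hMmat
      set v : ι → ℝ := fun j => Matrix.trace (P j * (EC * E)) / Matrix.trace (P j) with hv
      set S : Matrix (Fin n) (Fin n) ℝ :=
        ((Fintype.card G : ℝ) ^ (m + 1))⁻¹ • ∑ t : Fin (m + 1) → G, crbX φ E EC Cm (m + 1) t
        with hSdef
      have hmain : ((Fintype.card G : ℝ) ^ (m + 2))⁻¹ •
            ∑ g : Fin (m + 2) → G, crbX φ E EC Cm (m + 2) g
          = (Fintype.card G : ℝ)⁻¹ •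
            ∑ a : G, (φ a)ᵀ * (Cmᵀ * S * (Cm * (EC * E))) * φ a := by
        rw [crb_sum_cons]
        simp only [crbX_cons, hSdef, Matrix.smul_mul, Matrix.mul_smul, Finset.smul_sum,
          Finset.mul_sum, Finset.sum_mul]
        apply Finset.sum_congr rfl
        intro a _
        apply Finset.sum_congr rfl
        intro t _
        rw [smul_smul, ← mul_inv, ← pow_succ']
      rw [hmain, hSchur]
      apply Finset.sum_congr rfl
      intro i _
      congr 1
      rw [ih]
      have htr : Matrix.trace (P i *
            (Cmᵀ * (∑ j, ((Mmat ^ m).mulVec v) j • P j) * (Cm * (EC * E))))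
          = ∑ j, ((Mmat ^ m).mulVec v) j * Matrix.trace (P i * Cmᵀ * P j * Cm * (EC * E)) := by
        simp only [Finset.mul_sum, Finset.sum_mul, Matrix.mul_smul, Matrix.smul_mul,
          Matrix.trace_sum, Matrix.trace_smul, smul_eq_mul]
        apply Finset.sum_congr rfl
        intro j _
        congr 1
        simp only [Matrix.mul_assoc]
      rw [htr]
      have hpow : ((Mmat ^ (m + 1)).mulVec v) i
          = ∑ j, Mmat i j * ((Mmat ^ m).mulVec v) j := by
        rw [pow_succ', ← Matrix.mulVec_mulVec]
        simp [Matrix.mulVec, dotProduct]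
      rw [hpow, Finset.sum_div]
      apply Finset.sum_congr rfl
      intro j _
      rw [hMmat]
      simp only [Matrix.of_apply]
      ring

end CRBAux

theorem stmt_19 {n : ℕ} {G : Type*} [Group G] [Fintype G]
    {ι : Type*} [Fintype ι] [DecidableEq ι]
    (φ : G →* Matrix (Fin n) (Fin n) ℝ)
    (horth : ∀ g, φ g * (φ g)ᵀ = 1 ∧ (φ g)ᵀ * φ g = 1)
    (E EC Einv Cm : Matrix (Fin n) (Fin n) ℝ)
    (hCm : Cm * Cmᵀ = 1 ∧ Cmᵀ * Cm = 1)
    (P : ι → Matrix (Fin n) (Fin n) ℝ)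
    (htrP : ∀ i, Matrix.trace (P i) ≠ 0)
    (hSchur : ∀ A : Matrix (Fin n) (Fin n) ℝ,
      (Fintype.card G : ℝ)⁻¹ • ∑ g : G, (φ g)ᵀ * A * φ g =
        ∑ i, (Matrix.trace (P i * A) / Matrix.trace (P i)) • P i)
    (H : Subgroup G) [Fintype H]
    (χ : H → ℝ) (d : ℕ) (Pphi : Matrix (Fin n) (Fin n) ℝ)
    (hcharproj : (d : ℝ) • ((Fintype.card H : ℝ)⁻¹ • ∑ h : H, χ h • φ (h : G)) = Pphi)
    (lam : ι)
    (hPphi : ∀ i, P i * Pphi = if i = lam then Pphi else 0)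
    (Q ρ : Fin n → ℝ) (m : ℕ) (hm : 1 ≤ m) :
    ∀ kval : ℝ,
      kval = (d : ℝ) * ((Fintype.card H : ℝ) * (Fintype.card G : ℝ) ^ m)⁻¹ *
        ∑ h : H, ∑ g : Fin m → G, χ h *
          (Q ⬝ᵥ ((Einv * ((List.ofFn fun i => Cm * φ (g i)).reverse.prod)ᵀ *
            ((List.ofFn fun i => Cm * EC * E * φ (g i)).reverse.prod) *
            φ (h : G)).mulVec ρ)) →
      (kval =
        (∑ j, ((Matrix.of fun i j' =>
            Matrix.trace (P i * Cmᵀ * P j' * Cm * (EC * E)) / Matrix.trace (P i) :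
              Matrix ι ι ℝ) ^ (m - 1)) lam j *
          (Matrix.trace (P j * (EC * E)) / Matrix.trace (P j))) *
        (Q ⬝ᵥ ((Einv * Pphi).mulVec ρ)) ∧
      (EC * E = 1 → kval = Q ⬝ᵥ ((Einv * Pphi).mulVec ρ))) := by
  intro kval hk
  obtain ⟨m', rfl⟩ : ∃ m', m = m' + 1 := ⟨m - 1, (Nat.succ_pred_eq_of_pos hm).symm⟩
  set Mmat : Matrix ι ι ℝ := Matrix.of fun i j =>
    Matrix.trace (P i * Cmᵀ * P j * Cm * (EC * E)) / Matrix.trace (P i) with hMmat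
  set v : ι → ℝ := fun j => Matrix.trace (P j * (EC * E)) / Matrix.trace (P j) with hv
  have hkey := crb_key_sum φ E EC Cm hCm.2 P hSchur m'
  -- the matrix identity
  have hmat : ((d : ℝ) * ((Fintype.card H : ℝ) * (Fintype.card G : ℝ) ^ (m' + 1))⁻¹) •
      ∑ h : H, ∑ g : Fin (m' + 1) → G, χ h •
        (Einv * ((List.ofFn fun i => Cm * φ (g i)).reverse.prod)ᵀ *
          ((List.ofFn fun i => Cm * EC * E * φ (g i)).reverse.prod) * φ (h : G))
      = ((Mmat ^ m').mulVec v) lam • (Einv * Pphi) := by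
    have h1 : ∑ h : H, ∑ g : Fin (m' + 1) → G, χ h •
        (Einv * ((List.ofFn fun i => Cm * φ (g i)).reverse.prod)ᵀ *
          ((List.ofFn fun i => Cm * EC * E * φ (g i)).reverse.prod) * φ (h : G))
        = Einv * (∑ g : Fin (m' + 1) → G, crbX φ E EC Cm (m' + 1) g) *
            (∑ h : H, χ h • φ (h : G)) := by
      rw [Finset.mul_sum]
      apply Finset.sum_congr rfl
      intro h _
      rw [← Finset.smul_sum, Matrix.mul_smul]
      congr 1
      rw [Finset.mul_sum, Finset.sum_mul]
      apply Finset.sum_congr rfl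
      intro g _
      simp only [crbX, Matrix.mul_assoc]
    rw [h1]
    have h2 : ((d : ℝ) * ((Fintype.card H : ℝ) * (Fintype.card G : ℝ) ^ (m' + 1))⁻¹) •
        (Einv * (∑ g : Fin (m' + 1) → G, crbX φ E EC Cm (m' + 1) g) *
          (∑ h : H, χ h • φ (h : G)))
        = Einv * (((Fintype.card G : ℝ) ^ (m' + 1))⁻¹ •
            ∑ g : Fin (m' + 1) → G, crbX φ E EC Cm (m' + 1) g) *
          ((d : ℝ) • ((Fintype.card H : ℝ)⁻¹ • ∑ h : H, χ h • φ (h : G))) := by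
      have hsc : ∀ (a b : ℝ) (T U : Matrix (Fin n) (Fin n) ℝ),
          Einv * (a • T) * (b • U) = (a * b) • (Einv * T * U) := by
        intro a b T U
        simp only [Matrix.mul_smul, Matrix.smul_mul, smul_smul]
        rw [mul_comm]
      rw [smul_smul ((d : ℝ)) ((Fintype.card H : ℝ))⁻¹, hsc]
      congr 1
      rw [mul_inv]
      ring
    rw [h2, hcharproj, hkey, Finset.mul_sum, Finset.sum_mul]
    have h3 : ∀ i, Einv * (((Mmat ^ m').mulVec v) i • P i) * Pphi
        = if i = lam then ((Mmat ^ m').mulVec v) i • (Einv * Pphi) else 0 := by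
      intro i
      rw [Matrix.mul_smul, Matrix.smul_mul, Matrix.mul_assoc, hPphi]
      split_ifs with h
      · rfl
      · simp
    calc ∑ i, Einv * (((Mmat ^ m').mulVec v) i • P i) * Pphi
        = ∑ i, if i = lam then ((Mmat ^ m').mulVec v) i • (Einv * Pphi) else 0 := by
          exact Finset.sum_congr rfl fun i _ => h3 i
      _ = ((Mmat ^ m').mulVec v) lam • (Einv * Pphi) := by
          rw [Finset.sum_ite_eq' Finset.univ lam
            (fun i => ((Mmat ^ m').mulVec v) i • (Einv * Pphi))]
          simp
  -- express kval via the linear functional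
  have hk2 : kval = crbL Q ρ (((d : ℝ) *
      ((Fintype.card H : ℝ) * (Fintype.card G : ℝ) ^ (m' + 1))⁻¹) •
      ∑ h : H, ∑ g : Fin (m' + 1) → G, χ h •
        (Einv * ((List.ofFn fun i => Cm * φ (g i)).reverse.prod)ᵀ *
          ((List.ofFn fun i => Cm * EC * E * φ (g i)).reverse.prod) * φ (h : G))) := by
    rw [hk, _root_.map_smul, map_sum]
    simp only [map_sum, _root_.map_smul, crbL_apply, smul_eq_mul]
  have hfirst : kval =
      (∑ j, ((Mmat ^ m') lam j * v j)) * (Q ⬝ᵥ ((Einv * Pphi).mulVec ρ)) := by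
    rw [hk2, hmat, _root_.map_smul, crbL_apply, smul_eq_mul]
    congr 1
  have hm1 : m' + 1 - 1 = m' := rfl
  refine ⟨by rw [hfirst, hm1], ?_⟩
  -- second claim
  intro hEC
  -- sum of projectors is the identity
  have hPsum : ∑ i, P i = (1 : Matrix (Fin n) (Fin n) ℝ) := by
    have h := hSchur 1
    have hl : (Fintype.card G : ℝ)⁻¹ • ∑ g : G, (φ g)ᵀ * 1 * φ g = 1 := by
      have hone : ∀ g : G, (φ g)ᵀ * 1 * φ g = 1 := by
        intro g; rw [Matrix.mul_one]; exact (horth g).2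
      simp only [hone, Finset.sum_const, Finset.card_univ]
      rw [← Nat.cast_smul_eq_nsmul ℝ, smul_smul,
        inv_mul_cancel₀ (show ((Fintype.card G : ℝ)) ≠ 0 by
          exact_mod_cast Fintype.card_ne_zero), one_smul]
    rw [hl] at h
    calc ∑ i, P i
        = ∑ i, (Matrix.trace (P i * 1) / Matrix.trace (P i)) • P i := by
          apply Finset.sum_congr rfl
          intro i _
          rw [Matrix.mul_one, div_self (htrP i), one_smul]
      _ = 1 := h.symm
  have hrow : Mmat.mulVec (fun _ => (1 : ℝ)) = fun _ => 1 := by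
    funext i
    have : Mmat.mulVec (fun _ => (1 : ℝ)) i = ∑ j, Mmat i j := by
      simp [Matrix.mulVec, dotProduct]
    rw [this, hMmat]
    simp only [Matrix.of_apply]
    rw [← Finset.sum_div]
    have hnum : ∑ j, Matrix.trace (P i * Cmᵀ * P j * Cm * (EC * E)) =
        Matrix.trace (P i) := by
      have : ∑ j, Matrix.trace (P i * Cmᵀ * P j * Cm * (EC * E)) =
          Matrix.trace (P i * Cmᵀ * (∑ j, P j) * Cm * (EC * E)) := by
        simp only [Finset.mul_sum, Finset.sum_mul, Matrix.trace_sum]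
      rw [this, hPsum, Matrix.mul_one, hEC, Matrix.mul_one, Matrix.mul_assoc,
        hCm.2, Matrix.mul_one]
    rw [hnum, div_self (htrP i)]
  have hpow1 : ∀ k : ℕ, (Mmat ^ k).mulVec (fun _ => (1 : ℝ)) = fun _ => 1 := by
    intro k
    induction k with
    | zero => simp [Matrix.one_mulVec]
    | succ k ihk =>
        rw [pow_succ, ← Matrix.mulVec_mulVec, hrow, ihk]
  have hv1 : v = fun _ => 1 := by
    funext j
    rw [hv]
    simp only [hEC, Matrix.mul_one]
    exact div_self (htrP j)
  rw [hfirst]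
  have hfin : (∑ j, ((Mmat ^ m') lam j * v j)) = 1 := by
    have h1v : (∑ j, ((Mmat ^ m') lam j * (1 : ℝ)))
        = (Mmat ^ m').mulVec (fun _ => (1 : ℝ)) lam := by
      simp [Matrix.mulVec, dotProduct]
    rw [hv1, h1v, hpow1]
  rw [hfin, one_mul]
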